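/- (Lecture hall generating function) For every n ≥ 1, the formal power series ∑_λ x^{|λ|}, summed over all lecture hall partitions λ of length n, equals ∏_{i=1}^{n} 1/(1-x^{2i-1}). -/

import Mathlib

namespace LectureHall

/-- ceiling-type shift: `⌈((b+1)x)/b⌉ = x + ⌈x/b⌉` in truncated-div form. -/
lemma ceil_shift (b' x : ℕ) : ((b' + 2) * x + b') / (b' + 1) = x + (x + b') / (b' + 1) := by
  rw [show (b' + 2) * x + b' = (b' + 1) * x + (x + b') by ring,
    Nat.mul_add_div (by omega)]

/-- floor/ceiling complement: `⌊((b-1)x)/b⌋ + ⌈x/b⌉ = x` in truncated-div form. -/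
lemma floor_ceil (b' x : ℕ) : (b' * x) / (b' + 1) + (x + b') / (b' + 1) = x := by
  obtain ⟨s, r, hr, hx⟩ : ∃ s r, r < b' + 1 ∧ x = (b' + 1) * s + r :=
    ⟨x / (b' + 1), x % (b' + 1), Nat.mod_lt _ (by omega), (Nat.div_add_mod x (b' + 1)).symm⟩
  rcases r with _ | r'
  · subst hx
    rw [show b' * ((b' + 1) * s + 0) = (b' + 1) * (b' * s) + 0 by ring,
      Nat.mul_add_div (by omega),
      show (b' + 1) * s + 0 + b' = (b' + 1) * s + b' by ring,
      Nat.mul_add_div (by omega),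
      Nat.div_eq_of_lt (by omega), Nat.div_eq_of_lt (by omega)]
    ring
  · subst hx
    rw [show b' * ((b' + 1) * s + (r' + 1)) = (b' + 1) * (b' * s + r') + (b' - r') by
        have : r' ≤ b' := by omega
        cases Nat.le.dest this with
        | intro c hc => subst hc; ring_nf; omega,
      Nat.mul_add_div (by omega),
      show (b' + 1) * s + (r' + 1) + b' = (b' + 1) * (s + 1) + r' by ring,
      Nat.mul_add_div (by omega),
      Nat.div_eq_of_lt (by omega), Nat.div_eq_of_lt (by omega)]
    ring

def Lo (f : ℕ → ℕ) (p : ℕ) : ℕ := if p = 0 then 0 else ((p + 1) * f (p - 1) + (p - 1)) / p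

def Hi (f : ℕ → ℕ) (p : ℕ) : ℕ := ((p + 1) * f (p + 1)) / (p + 2)

/-- Key summation identity. -/
lemma key : ∀ (m' : ℕ) (f : ℕ → ℕ),
    ((∑ p ∈ Finset.range (m' + 1), if p % 2 = (m' + 1) % 2 then Lo f p + Hi f p else 0)
      + (f m' + (f m' + m') / (m' + 1)))
    = 2 * ∑ p ∈ Finset.range (m' + 1), if ¬ (p % 2 = (m' + 1) % 2) then f p else 0
  | 0, f => by
      simp [Finset.sum_range_succ, Lo, Hi]
      omega
  | 1, f => by
      have h2 : f 1 / 2 + (f 1 + 1) / 2 = f 1 := by omega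
      simp [Finset.sum_range_succ, Lo, Hi]
      omega
  | (k + 2), f => by
      have IH := key k f
      simp only [show k + 2 + 1 = k + 3 from rfl]
      have hpar : (k + 3) % 2 = (k + 1) % 2 := by omega
      have h2 : ¬ ((k + 2) % 2 = (k + 1) % 2) := by omega
      have e1 : (∑ p ∈ Finset.range (k + 3), if p % 2 = (k + 3) % 2 then Lo f p + Hi f p else 0)
          = (∑ p ∈ Finset.range (k + 1), if p % 2 = (k + 1) % 2 then Lo f p + Hi f p else 0)
            + (Lo f (k + 1) + Hi f (k + 1)) := by
        simp only [hpar]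
        rw [Finset.sum_range_succ, Finset.sum_range_succ, if_pos rfl, if_neg h2]
        ring
      have e2 : (∑ p ∈ Finset.range (k + 3), if ¬ (p % 2 = (k + 3) % 2) then f p else 0)
          = (∑ p ∈ Finset.range (k + 1), if ¬ (p % 2 = (k + 1) % 2) then f p else 0)
            + f (k + 2) := by
        simp only [hpar]
        rw [Finset.sum_range_succ, Finset.sum_range_succ, if_pos h2, if_neg (by simp)]
        ring
      rw [e1, e2]
      -- boundary identities
      have hLo : Lo f (k + 1) = f k + (f k + k) / (k + 1) := by
        show (if k + 1 = 0 then 0 else ((k + 2) * f k + k) / (k + 1)) = _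
        rw [if_neg (by omega)]
        exact ceil_shift k (f k)
      have hHi : Hi f (k + 1) + (f (k + 2) + (k + 2)) / (k + 3) = f (k + 2) := by
        show ((k + 2) * f (k + 2)) / (k + 3) + _ = _
        exact floor_ceil (k + 2) (f (k + 2))
      omega


/-- lecture hall condition, adjacent integer form -/
def LH {n : ℕ} (l : Fin n → ℕ) : Prop :=
  ∀ p : ℕ, ∀ h : p + 1 < n, (p + 2) * l ⟨p, by omega⟩ ≤ (p + 1) * l ⟨p + 1, h⟩

def wt {n : ℕ} (l : Fin n → ℕ) : ℕ := ∑ i, l i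

def dz {n : ℕ} (l : Fin n → ℕ) : ℤ := ∑ i : Fin n, (-1 : ℤ) ^ (n - 1 - (i : ℕ)) * (l i : ℤ)

def ct : {m : ℕ} → (Fin m → ℕ) → ℕ
  | 0, _ => 0
  | (m' + 1), μ => μ (Fin.last m') + (μ (Fin.last m') + m') / (m' + 1)

def fv {m : ℕ} (μ : Fin m → ℕ) (p : ℕ) : ℕ := if h : p < m then μ ⟨p, h⟩ else 0

def sg {m : ℕ} (μ : Fin m → ℕ) : Fin m → ℕ :=
  fun i => if (i : ℕ) % 2 = m % 2 then Lo (fv μ) i + Hi (fv μ) i - μ i else μ i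

lemma fv_lt {m : ℕ} (μ : Fin m → ℕ) {p : ℕ} (h : p < m) : fv μ p = μ ⟨p, h⟩ := dif_pos h

lemma refl_add_one_lt {m : ℕ} (i : Fin m) (hr : (i : ℕ) % 2 = m % 2) : (i : ℕ) + 1 < m := by
  have := i.isLt; omega

lemma bounds {m : ℕ} {μ : Fin m → ℕ} (h : LH μ) (i : Fin m) (hr : (i : ℕ) % 2 = m % 2) :
    Lo (fv μ) i ≤ μ i ∧ μ i ≤ Hi (fv μ) i := by
  have h1 : (i : ℕ) + 1 < m := refl_add_one_lt i hr
  constructor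
  · unfold Lo
    rcases Nat.eq_zero_or_pos (i : ℕ) with h0 | h0
    · rw [if_pos h0]; exact Nat.zero_le _
    · rw [if_neg (by omega)]
      obtain ⟨p, hp⟩ : ∃ p, (i : ℕ) = p + 1 := ⟨(i : ℕ) - 1, by omega⟩
      have hplt : p < m := by omega
      have hcond := h p (by omega)
      have hi : i = ⟨p + 1, by omega⟩ := Fin.ext hp
      rw [hi]
      simp only [Nat.add_sub_cancel]
      rw [fv_lt μ hplt]
      rw [Nat.div_le_iff_le_mul_add_pred (by omega : 0 < p + 1)]
      have : (p + 1) * μ ⟨p + 1, by omega⟩ + (p + 1 - 1) = (p + 1) * μ ⟨p + 1, by omega⟩ + p := by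
        omega
      rw [this]
      exact Nat.add_le_add_right hcond p
  · unfold Hi
    rw [fv_lt μ h1]
    rw [Nat.le_div_iff_mul_le (by omega : 0 < (i : ℕ) + 2)]
    have hcond := h (i : ℕ) h1
    rw [mul_comm]
    simpa using hcond

lemma sg_apply_refl {m : ℕ} (μ : Fin m → ℕ) {i : Fin m} (hr : (i : ℕ) % 2 = m % 2) :
    sg μ i = Lo (fv μ) i + Hi (fv μ) i - μ i := if_pos hr

lemma sg_apply_fixed {m : ℕ} (μ : Fin m → ℕ) {i : Fin m} (hr : ¬ ((i : ℕ) % 2 = m % 2)) :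
    sg μ i = μ i := if_neg hr

lemma fv_sg_fixed {m : ℕ} (μ : Fin m → ℕ) {q : ℕ} (hq : ¬ (q % 2 = m % 2)) :
    fv (sg μ) q = fv μ q := by
  unfold fv
  split
  · exact sg_apply_fixed μ hq
  · rfl

lemma Lo_sg {m : ℕ} (μ : Fin m → ℕ) {i : Fin m} (hr : (i : ℕ) % 2 = m % 2) :
    Lo (fv (sg μ)) i = Lo (fv μ) i := by
  unfold Lo
  rcases Nat.eq_zero_or_pos (i : ℕ) with h0 | h0
  · rw [if_pos h0, if_pos h0]
  · rw [if_neg (by omega), if_neg (by omega), fv_sg_fixed μ (by have := i.isLt; omega)]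

lemma Hi_sg {m : ℕ} (μ : Fin m → ℕ) {i : Fin m} (hr : (i : ℕ) % 2 = m % 2) :
    Hi (fv (sg μ)) i = Hi (fv μ) i := by
  unfold Hi
  rw [fv_sg_fixed μ (by have := i.isLt; omega)]

lemma LH_sg {m : ℕ} {μ : Fin m → ℕ} (h : LH μ) : LH (sg μ) := by
  intro p hp
  by_cases hr : p % 2 = m % 2
  · have hr1 : ¬ ((p + 1) % 2 = m % 2) := by omega
    have hb := bounds h ⟨p, by omega⟩ hr
    rw [sg_apply_fixed μ (i := ⟨p + 1, hp⟩) hr1, sg_apply_refl μ (i := ⟨p, by omega⟩) hr]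
    simp only [Fin.val_mk] at hb ⊢
    have h1 : Lo (fv μ) p + Hi (fv μ) p - μ ⟨p, by omega⟩ ≤ Hi (fv μ) p := by omega
    have h2 : (p + 2) * Hi (fv μ) p ≤ (p + 1) * μ ⟨p + 1, hp⟩ := by
      show (p + 2) * (((p + 1) * fv μ (p + 1)) / (p + 2)) ≤ _
      rw [fv_lt μ hp]
      exact Nat.mul_div_le _ _
    exact le_trans (Nat.mul_le_mul_left _ h1) h2
  · have hr1 : (p + 1) % 2 = m % 2 := by omega
    have hb := bounds h ⟨p + 1, hp⟩ hr1
    rw [sg_apply_fixed μ (i := ⟨p, by omega⟩) hr, sg_apply_refl μ (i := ⟨p + 1, hp⟩) hr1]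
    simp only [Fin.val_mk] at hb ⊢
    have h1 : Lo (fv μ) (p + 1)
        ≤ Lo (fv μ) (p + 1) + Hi (fv μ) (p + 1) - μ ⟨p + 1, hp⟩ := by omega
    have h2 : (p + 2) * μ ⟨p, by omega⟩ ≤ (p + 1) * Lo (fv μ) (p + 1) := by
      have hLo : Lo (fv μ) (p + 1) = ((p + 2) * μ ⟨p, by omega⟩ + p) / (p + 1) := by
        show (if p + 1 = 0 then 0 else ((p + 1 + 1) * fv μ (p + 1 - 1) + (p + 1 - 1)) / (p + 1)) = _
        rw [if_neg (by omega)]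
        simp only [Nat.add_sub_cancel]
        rw [fv_lt μ (by omega : p < m)]
      rw [hLo]
      generalize (p + 2) * μ ⟨p, by omega⟩ = a
      have h3 := (Nat.div_le_iff_le_mul_add_pred (by omega : 0 < p + 1)).mp
        (le_refl ((a + p) / (p + 1)))
      generalize hK : (p + 1) * ((a + p) / (p + 1)) = K at h3 ⊢
      omega
    exact le_trans h2 (Nat.mul_le_mul_left _ h1)

lemma sg_sg {m : ℕ} {μ : Fin m → ℕ} (h : LH μ) : sg (sg μ) = μ := by
  funext i
  by_cases hr : (i : ℕ) % 2 = m % 2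
  · rw [sg_apply_refl (sg μ) hr, Lo_sg μ hr, Hi_sg μ hr, sg_apply_refl μ hr]
    have hb := bounds h i hr
    omega
  · rw [sg_apply_fixed (sg μ) hr, sg_apply_fixed μ hr]


lemma sign_eval {m : ℕ} (i : Fin m) :
    (-1 : ℤ) ^ (m - 1 - (i : ℕ)) = if (i : ℕ) % 2 = m % 2 then -1 else 1 := by
  have hlt := i.isLt
  rcases Nat.even_or_odd (m - 1 - (i : ℕ)) with he | ho
  · rw [he.neg_one_pow, if_neg]
    rw [Nat.even_iff] at he
    omega
  · rw [ho.neg_one_pow, if_pos]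
    rw [Nat.odd_iff] at ho
    omega

lemma ct_zero (μ : Fin 0 → ℕ) : ct μ = 0 := rfl

lemma ct_succ {m' : ℕ} (μ : Fin (m' + 1) → ℕ) :
    ct μ = μ (Fin.last m') + (μ (Fin.last m') + m') / (m' + 1) := rfl

section stats

variable {m : ℕ} {μ : Fin m → ℕ}

/-- combined statistics lemma for the reflection involution -/
lemma sg_stats (h : LH μ) :
    (wt (sg μ) : ℤ) = wt μ + 2 * dz μ - ct μ ∧ dz (sg μ) = ct μ - dz μ := by
  cases m with
  | zero =>
      refine ⟨?_, ?_⟩ <;> simp [wt, dz, ct_zero]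
  | succ m' =>
    set R : Finset (Fin (m' + 1)) :=
      Finset.univ.filter (fun i : Fin (m' + 1) => (i : ℕ) % 2 = (m' + 1) % 2) with hR
    set Rc : Finset (Fin (m' + 1)) :=
      Finset.univ.filter (fun i : Fin (m' + 1) => ¬ ((i : ℕ) % 2 = (m' + 1) % 2)) with hRc
    -- transfer of the key identity
    have key' := key m' (fv μ)
    have t1 : (∑ p ∈ Finset.range (m' + 1),
          if p % 2 = (m' + 1) % 2 then Lo (fv μ) p + Hi (fv μ) p else 0)
        = ∑ i ∈ R, (Lo (fv μ) (i : ℕ) + Hi (fv μ) (i : ℕ)) := by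
      rw [hR, Finset.sum_filter]
      exact (Fin.sum_univ_eq_sum_range
        (fun p => if p % 2 = (m' + 1) % 2 then Lo (fv μ) p + Hi (fv μ) p else 0) (m' + 1)).symm
    have t2 : (∑ p ∈ Finset.range (m' + 1), if ¬ (p % 2 = (m' + 1) % 2) then fv μ p else 0)
        = ∑ i ∈ Rc, μ i := by
      rw [hRc, Finset.sum_filter]
      rw [← Fin.sum_univ_eq_sum_range
        (fun p => if ¬ (p % 2 = (m' + 1) % 2) then fv μ p else 0) (m' + 1)]
      refine Finset.sum_congr rfl fun i _ => ?_
      by_cases hc : (i : ℕ) % 2 = (m' + 1) % 2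
      · rw [if_neg (by simpa using hc), if_neg (by simpa using hc)]
      · rw [if_pos hc, if_pos hc, fv_lt μ i.isLt, Fin.eta]
    have t3 : fv μ m' + (fv μ m' + m') / (m' + 1) = ct μ := by
      rw [ct_succ, fv_lt μ (Nat.lt_succ_self m')]
      rfl
    rw [t1, t2, t3] at key'
    -- key' : (∑ i ∈ R, (Lo + Hi)) + ct μ = 2 * ∑ i ∈ Rc, μ i
    -- integer abbreviations
    set A : ℤ := ∑ i ∈ R, (μ i : ℤ) with hA
    set B : ℤ := ∑ i ∈ Rc, (μ i : ℤ) with hB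
    set L : ℤ := ∑ i ∈ R, ((Lo (fv μ) (i : ℕ) : ℤ) + (Hi (fv μ) (i : ℕ) : ℤ)) with hL
    have keyZ : L + (ct μ : ℤ) = 2 * B := by
      have := congrArg (fun x : ℕ => (x : ℤ)) key'
      push_cast at this
      simpa [hL, hB] using this
    have hwt : (wt μ : ℤ) = A + B := by
      rw [wt, ← Finset.sum_filter_add_sum_filter_not Finset.univ
        (fun i : Fin (m' + 1) => (i : ℕ) % 2 = (m' + 1) % 2) μ]
      push_cast
      rfl
    have hdz : dz μ = B - A := by
      rw [dz, ← Finset.sum_filter_add_sum_filter_not Finset.univ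
        (fun i : Fin (m' + 1) => (i : ℕ) % 2 = (m' + 1) % 2)
        (fun i => (-1 : ℤ) ^ (m' + 1 - 1 - (i : ℕ)) * (μ i : ℤ))]
      have e1 : ∑ i ∈ R, (-1 : ℤ) ^ (m' + 1 - 1 - (i : ℕ)) * (μ i : ℤ) = -A := by
        rw [hA, ← Finset.sum_neg_distrib]
        refine Finset.sum_congr rfl fun i hi => ?_
        rw [sign_eval i, if_pos (by simpa [hR] using hi)]
        ring
      have e2 : ∑ i ∈ Rc, (-1 : ℤ) ^ (m' + 1 - 1 - (i : ℕ)) * (μ i : ℤ) = B := by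
        rw [hB]
        refine Finset.sum_congr rfl fun i hi => ?_
        rw [sign_eval i, if_neg (by simpa [hRc] using hi)]
        ring
      rw [e1, e2]
      ring
    -- sums of sg
    have hsgR : ∑ i ∈ R, (sg μ i : ℤ) = L - A := by
      rw [hL, hA, ← Finset.sum_sub_distrib]
      refine Finset.sum_congr rfl fun i hi => ?_
      have hri : (i : ℕ) % 2 = (m' + 1) % 2 := by simpa [hR] using hi
      have hb := bounds h i hri
      rw [sg_apply_refl μ hri]
      have hle : μ i ≤ Lo (fv μ) (i : ℕ) + Hi (fv μ) (i : ℕ) := by omega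
      push_cast [Nat.cast_sub hle]
      ring
    have hsgRc : ∑ i ∈ Rc, (sg μ i : ℤ) = B := by
      rw [hB]
      refine Finset.sum_congr rfl fun i hi => ?_
      rw [sg_apply_fixed μ (by simpa [hRc] using hi)]
    have hwts : (wt (sg μ) : ℤ) = (L - A) + B := by
      rw [wt, ← Finset.sum_filter_add_sum_filter_not Finset.univ
        (fun i : Fin (m' + 1) => (i : ℕ) % 2 = (m' + 1) % 2) (sg μ)]
      push_cast
      rw [← hsgR, ← hsgRc]
    have hdzs : dz (sg μ) = B - (L - A) := by
      rw [dz, ← Finset.sum_filter_add_sum_filter_not Finset.univ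
        (fun i : Fin (m' + 1) => (i : ℕ) % 2 = (m' + 1) % 2)
        (fun i => (-1 : ℤ) ^ (m' + 1 - 1 - (i : ℕ)) * (sg μ i : ℤ))]
      have e1 : ∑ i ∈ R, (-1 : ℤ) ^ (m' + 1 - 1 - (i : ℕ)) * (sg μ i : ℤ)
          = - ∑ i ∈ R, (sg μ i : ℤ) := by
        rw [← Finset.sum_neg_distrib]
        refine Finset.sum_congr rfl fun i hi => ?_
        rw [sign_eval i, if_pos (by simpa [hR] using hi)]
        ring
      have e2 : ∑ i ∈ Rc, (-1 : ℤ) ^ (m' + 1 - 1 - (i : ℕ)) * (sg μ i : ℤ)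
          = ∑ i ∈ Rc, (sg μ i : ℤ) := by
        refine Finset.sum_congr rfl fun i hi => ?_
        rw [sign_eval i, if_neg (by simpa [hRc] using hi)]
        ring
      rw [e1, e2, hsgR, hsgRc]
      ring
    constructor
    · rw [hwts, hwt, hdz]
      linarith [keyZ]
    · rw [hdzs, hdz]
      linarith [keyZ]

end stats

end LectureHall

/-! ### Peeling the top part, and the main recursive equivalence -/

namespace LectureHall2
end LectureHall2

namespace LectureHall

lemma LH_init {n : ℕ} {l : Fin (n + 1) → ℕ} (h : LH l) : LH (Fin.init l) := by
  intro p hp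
  have := h p (by omega)
  simpa [Fin.init] using this

lemma ct_le_iff {m' : ℕ} (μ : Fin (m' + 1) → ℕ) (y : ℕ) :
    ct μ ≤ y ↔ (m' + 2) * μ (Fin.last m') ≤ (m' + 1) * y := by
  rw [ct_succ, ← ceil_shift m' (μ (Fin.last m')),
    Nat.div_le_iff_le_mul_add_pred (by omega : 0 < m' + 1)]
  constructor <;> intro hh
  · have : (m' + 1) * y + (m' + 1 - 1) = (m' + 1) * y + m' := by omega
    rw [this] at hh
    omega
  · omega

lemma ct_le_last {n : ℕ} {l : Fin (n + 1) → ℕ} (h : LH l) :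
    ct (Fin.init l) ≤ l (Fin.last n) := by
  cases n with
  | zero => simp [ct_zero]
  | succ n' =>
    rw [ct_le_iff]
    have := h n' (by omega)
    have e1 : Fin.init l (Fin.last n') = l ⟨n', by omega⟩ := by
      simp [Fin.init, Fin.last, Fin.castSucc, Fin.castAdd, Fin.castLE]
    rw [e1]
    have e2 : (⟨n' + 1, by omega⟩ : Fin (n' + 2)) = Fin.last (n' + 1) := rfl
    rw [e2] at this
    exact this

lemma LH_snoc {n : ℕ} {μ : Fin n → ℕ} (h : LH μ) {t : ℕ} (ht : ct μ ≤ t) :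
    LH (Fin.snoc μ t) := by
  intro p hp
  by_cases hpn : p + 1 < n
  · have e1 : (Fin.snoc μ t : Fin (n + 1) → ℕ) ⟨p, by omega⟩
        = μ ⟨p, by omega⟩ := by
      have : (⟨p, by omega⟩ : Fin (n + 1)) = Fin.castSucc ⟨p, by omega⟩ := rfl
      rw [this, Fin.snoc_castSucc]
    have e2 : (Fin.snoc μ t : Fin (n + 1) → ℕ) ⟨p + 1, hp⟩
        = μ ⟨p + 1, hpn⟩ := by
      have : (⟨p + 1, hp⟩ : Fin (n + 1)) = Fin.castSucc ⟨p + 1, hpn⟩ := rfl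
      rw [this, Fin.snoc_castSucc]
    rw [e1, e2]
    exact h p hpn
  · -- p + 1 = n
    have hpn' : p + 1 = n := by omega
    subst hpn'
    have e1 : (Fin.snoc μ t : Fin (p + 2) → ℕ) ⟨p, by omega⟩
        = μ (Fin.last p) := by
      have : (⟨p, by omega⟩ : Fin (p + 2)) = Fin.castSucc (Fin.last p) := rfl
      rw [this, Fin.snoc_castSucc]
    have e2 : (Fin.snoc μ t : Fin (p + 2) → ℕ) ⟨p + 1, hp⟩ = t := by
      have : (⟨p + 1, hp⟩ : Fin (p + 2)) = Fin.last (p + 1) := rfl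
      rw [this, Fin.snoc_last]
    rw [e1, e2]
    exact (ct_le_iff μ t).mp ht

def peel {n : ℕ} : {l : Fin (n + 1) → ℕ // LH l} ≃ ℕ × {μ : Fin n → ℕ // LH μ} where
  toFun l := ⟨l.1 (Fin.last n) - ct (Fin.init l.1), ⟨Fin.init l.1, LH_init l.2⟩⟩
  invFun kμ := ⟨Fin.snoc kμ.2.1 (ct kμ.2.1 + kμ.1), LH_snoc kμ.2.2 (Nat.le_add_right _ _)⟩
  left_inv l := by
    apply Subtype.ext
    simp only
    rw [Nat.add_sub_cancel' (ct_le_last l.2), Fin.snoc_init_self]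
  right_inv kμ := by
    rcases kμ with ⟨k, μ⟩
    apply Prod.ext
    · simp only [Fin.init_snoc, Fin.snoc_last]
      omega
    · apply Subtype.ext
      simp only [Fin.init_snoc]

def sgEquiv {m : ℕ} : {μ : Fin m → ℕ // LH μ} ≃ {μ : Fin m → ℕ // LH μ} where
  toFun μ := ⟨sg μ.1, LH_sg μ.2⟩
  invFun μ := ⟨sg μ.1, LH_sg μ.2⟩
  left_inv μ := Subtype.ext (sg_sg μ.2)
  right_inv μ := Subtype.ext (sg_sg μ.2)

def E : (n : ℕ) → ({l : Fin n → ℕ // LH l} ≃ (Fin n → ℕ))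
  | 0 => ⟨fun l => l.1, fun f => ⟨f, fun p hp => by omega⟩, fun l => rfl, fun f => rfl⟩
  | (n + 1) =>
    peel.trans (((Equiv.refl ℕ).prodCongr (sgEquiv.trans (E n))).trans
      (Fin.consEquiv (fun _ : Fin (n + 1) => ℕ)))

lemma E_succ_apply {n : ℕ} (x : {l : Fin (n + 1) → ℕ // LH l}) :
    E (n + 1) x = Fin.cons (x.1 (Fin.last n) - ct (Fin.init x.1))
      (E n (sgEquiv ⟨Fin.init x.1, LH_init x.2⟩)) := rfl


lemma wt_snoc {n : ℕ} (μ : Fin n → ℕ) (t : ℕ) : wt (Fin.snoc μ t) = wt μ + t := by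
  simp [wt, Fin.sum_univ_castSucc]

lemma dz_snoc {n : ℕ} (μ : Fin n → ℕ) (t : ℕ) : dz (Fin.snoc μ t) = t - dz μ := by
  unfold dz
  rw [Fin.sum_univ_castSucc]
  simp only [Fin.snoc_castSucc, Fin.snoc_last, Fin.coe_castSucc, Fin.val_last]
  have h0 : n + 1 - 1 - n = 0 := by omega
  rw [h0]
  have e : ∑ i : Fin n, (-1 : ℤ) ^ (n + 1 - 1 - (i : ℕ)) * (μ i : ℤ)
      = - ∑ i : Fin n, (-1 : ℤ) ^ (n - 1 - (i : ℕ)) * (μ i : ℤ) := by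
    rw [← Finset.sum_neg_distrib]
    refine Finset.sum_congr rfl fun i _ => ?_
    have hi := i.isLt
    have hexp : n + 1 - 1 - (i : ℕ) = (n - 1 - (i : ℕ)) + 1 := by omega
    rw [hexp, pow_succ]
    ring
  rw [e]
  ring

theorem E_spec : ∀ (n : ℕ) (x : {l : Fin n → ℕ // LH l}),
    ((wt x.1 : ℤ) = ∑ i : Fin n, ((E n x) i : ℤ) * (2 * (i : ℕ) + 1)) ∧
    dz x.1 = ∑ i : Fin n, ((E n x) i : ℤ)
  | 0, x => by
      constructor <;> simp [wt, dz]
  | (n + 1), x => by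
      have IH := E_spec n (sgEquiv ⟨Fin.init x.1, LH_init x.2⟩)
      have hLHμ : LH (Fin.init x.1) := LH_init x.2
      have hctle := ct_le_last x.2
      set μ : Fin n → ℕ := Fin.init x.1 with hμ
      set k : ℕ := x.1 (Fin.last n) - ct μ with hk
      have hlast : x.1 (Fin.last n) = ct μ + k := by rw [hk]; omega
      have hxdecomp : wt x.1 = wt μ + (ct μ + k) ∧ dz x.1 = (ct μ + k : ℤ) - dz μ := by
        have hd : x.1 = Fin.snoc μ (ct μ + k) := by rw [← hlast, hμ, Fin.snoc_init_self]
        constructor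
        · conv_lhs => rw [hd]
          exact wt_snoc μ _
        · conv_lhs => rw [hd]
          rw [dz_snoc μ _]
          push_cast
          ring
      have hstats := sg_stats hLHμ
      set a : Fin n → ℕ := E n (sgEquiv ⟨μ, hLHμ⟩) with ha
      have hEapp : E (n + 1) x = Fin.cons k a := rfl
      have hIH1 : (wt (sg μ) : ℤ) = ∑ i : Fin n, (a i : ℤ) * (2 * (i : ℕ) + 1) := IH.1
      have hIH2 : dz (sg μ) = ∑ i : Fin n, (a i : ℤ) := IH.2
      rw [hEapp]
      have hsplit : ∑ i : Fin n, (a i : ℤ) * (2 * ((i : ℕ) + 1) + 1)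
          = (∑ i : Fin n, (a i : ℤ) * (2 * (i : ℕ) + 1)) + 2 * ∑ i : Fin n, (a i : ℤ) := by
        rw [Finset.mul_sum, ← Finset.sum_add_distrib]
        refine Finset.sum_congr rfl fun i _ => ?_
        ring
      have hx1 : (wt x.1 : ℤ) = (wt μ : ℤ) + ((ct μ : ℤ) + (k : ℤ)) := by
        exact_mod_cast congrArg (fun y : ℕ => (y : ℤ)) hxdecomp.1
      constructor
      · rw [Fin.sum_univ_succ]
        simp only [Fin.cons_zero, Fin.cons_succ, Fin.val_succ, Fin.val_zero]
        push_cast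
        rw [hsplit, ← hIH1, ← hIH2]
        linarith [hstats.1, hstats.2, hx1]
      · rw [Fin.sum_univ_succ]
        simp only [Fin.cons_zero, Fin.cons_succ, Fin.val_succ, Fin.val_zero]
        rw [← hIH2, hstats.2, hxdecomp.2]
        ring


/-! ### Counting -/

def W {n : ℕ} (a : Fin n → ℕ) : ℕ := ∑ i, a i * (2 * (i : ℕ) + 1)

lemma wt_eq_W {n : ℕ} (x : {l : Fin n → ℕ // LH l}) : wt x.1 = W (E n x) := by
  have h1 := (E_spec n x).1
  have h2 : (W (E n x) : ℤ) = ∑ i : Fin n, ((E n x) i : ℤ) * (2 * (i : ℕ) + 1) := by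
    unfold W
    push_cast
    rfl
  exact_mod_cast h1.trans h2.symm

theorem card_LH (n m : ℕ) :
    Nat.card {l : Fin n → ℕ // LH l ∧ wt l = m} = Nat.card {a : Fin n → ℕ // W a = m} := by
  apply Nat.card_congr
  refine ((Equiv.subtypeSubtypeEquivSubtypeInter LH (fun l => wt l = m)).symm).trans ?_
  exact Equiv.subtypeEquiv (E n) (fun x => by rw [wt_eq_W ⟨x.1, x.2⟩])

lemma W_bound {n m : ℕ} (a : {a : Fin n → ℕ // W a = m}) (i : Fin n) : a.1 i ≤ m := by
  have h1 : a.1 i ≤ a.1 i * (2 * (i : ℕ) + 1) := Nat.le_mul_of_pos_right _ (by omega)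
  have h2 : a.1 i * (2 * (i : ℕ) + 1) ≤ ∑ j, a.1 j * (2 * (j : ℕ) + 1) :=
    Finset.single_le_sum (f := fun j : Fin n => a.1 j * (2 * (j : ℕ) + 1))
      (fun j _ => Nat.zero_le _) (Finset.mem_univ i)
  have h3 := a.2
  unfold W at h3
  omega

instance finW (n m : ℕ) : Finite {a : Fin n → ℕ // W a = m} := by
  apply Finite.of_injective
    (fun a : {a : Fin n → ℕ // W a = m} =>
      (fun i => (⟨a.1 i, Nat.lt_succ_of_le (W_bound a i)⟩ : Fin (m + 1))))
  intro a b h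
  apply Subtype.ext
  funext i
  have := congrFun h i
  simpa using congrArg Fin.val this

lemma W_snoc {n : ℕ} (b : Fin n → ℕ) (t : ℕ) :
    W (Fin.snoc b t) = W b + t * (2 * n + 1) := by
  unfold W
  rw [Fin.sum_univ_castSucc]
  simp [Fin.snoc_castSucc, Fin.snoc_last, Fin.coe_castSucc, Fin.val_last]

lemma W_decomp {n : ℕ} (a : Fin (n + 1) → ℕ) :
    W a = W (Fin.init a) + a (Fin.last n) * (2 * n + 1) := by
  conv_lhs => rw [← Fin.snoc_init_self a]
  exact W_snoc _ _

def e0 {n m : ℕ} :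
    {x : {a : Fin (n + 1) → ℕ // W a = m} // x.1 (Fin.last n) = 0}
      ≃ {b : Fin n → ℕ // W b = m} where
  toFun x := ⟨Fin.init x.1.1, by
    have := W_decomp x.1.1
    rw [x.1.2, x.2] at this
    omega⟩
  invFun b := ⟨⟨Fin.snoc b.1 0, by rw [W_snoc, b.2]; simp⟩, by
    show (Fin.snoc b.1 0 : Fin (n + 1) → ℕ) (Fin.last n) = 0
    exact Fin.snoc_last _ _⟩
  left_inv x := by
    apply Subtype.ext
    apply Subtype.ext
    have hx := x.2
    show Fin.snoc (Fin.init x.1.1) 0 = x.1.1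
    conv_rhs => rw [← Fin.snoc_init_self x.1.1]
    rw [hx]
  right_inv b := by
    apply Subtype.ext
    simp only [Fin.init_snoc]

def e1 {n m : ℕ} (hm : 2 * n + 1 ≤ m) :
    {x : {a : Fin (n + 1) → ℕ // W a = m} // ¬ (x.1 (Fin.last n) = 0)}
      ≃ {a : Fin (n + 1) → ℕ // W a = m - (2 * n + 1)} where
  toFun x := ⟨Fin.snoc (Fin.init x.1.1) (x.1.1 (Fin.last n) - 1), by
    have hd := W_decomp x.1.1
    rw [x.1.2] at hd
    have hne := x.2
    rw [W_snoc]
    have : (x.1.1 (Fin.last n) - 1) * (2 * n + 1)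
        = x.1.1 (Fin.last n) * (2 * n + 1) - (2 * n + 1) := by
      obtain ⟨c, hc⟩ : ∃ c, x.1.1 (Fin.last n) = c + 1 :=
        ⟨x.1.1 (Fin.last n) - 1, by omega⟩
      rw [hc]
      simp only [Nat.add_sub_cancel]
      rw [Nat.add_mul]
      omega
    have hb : 1 * (2 * n + 1) ≤ x.1.1 (Fin.last n) * (2 * n + 1) :=
      Nat.mul_le_mul_right _ (by omega)
    omega⟩
  invFun a := ⟨⟨Fin.snoc (Fin.init a.1) (a.1 (Fin.last n) + 1), by
      have hd := W_decomp a.1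
      rw [a.2] at hd
      rw [W_snoc]
      have : (a.1 (Fin.last n) + 1) * (2 * n + 1)
          = a.1 (Fin.last n) * (2 * n + 1) + (2 * n + 1) := by ring
      omega⟩, by
    show ¬ (Fin.snoc (Fin.init a.1) (a.1 (Fin.last n) + 1)) (Fin.last n) = 0
    rw [Fin.snoc_last]
    omega⟩
  left_inv x := by
    apply Subtype.ext
    apply Subtype.ext
    have hne := x.2
    show Fin.snoc (Fin.init (Fin.snoc (Fin.init x.1.1) (x.1.1 (Fin.last n) - 1)))
      ((Fin.snoc (Fin.init x.1.1) (x.1.1 (Fin.last n) - 1) : Fin (n+1) → ℕ) (Fin.last n) + 1)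
      = x.1.1
    rw [Fin.init_snoc, Fin.snoc_last]
    have h1 : x.1.1 (Fin.last n) - 1 + 1 = x.1.1 (Fin.last n) := by omega
    rw [h1, Fin.snoc_init_self]
  right_inv a := by
    apply Subtype.ext
    show Fin.snoc (Fin.init (Fin.snoc (Fin.init a.1) (a.1 (Fin.last n) + 1)))
      ((Fin.snoc (Fin.init a.1) (a.1 (Fin.last n) + 1) : Fin (n+1) → ℕ) (Fin.last n) - 1)
      = a.1
    rw [Fin.init_snoc, Fin.snoc_last, Nat.add_sub_cancel, Fin.snoc_init_self]

noncomputable def N (n m : ℕ) : ℕ := Nat.card {a : Fin n → ℕ // W a = m}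

lemma N_split (n m : ℕ) :
    N (n + 1) m = N n m + if 2 * n + 1 ≤ m then N (n + 1) (m - (2 * n + 1)) else 0 := by
  classical
  have hsum : N (n + 1) m
      = Nat.card {x : {a : Fin (n + 1) → ℕ // W a = m} // x.1 (Fin.last n) = 0}
        + Nat.card {x : {a : Fin (n + 1) → ℕ // W a = m} // ¬ (x.1 (Fin.last n) = 0)} := by
    rw [N, ← Nat.card_sum, Nat.card_congr (Equiv.sumCompl _)]
  rw [hsum, Nat.card_congr (e0 (n := n) (m := m))]
  congr 1
  by_cases hm : 2 * n + 1 ≤ m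
  · rw [if_pos hm, Nat.card_congr (e1 hm)]
    rfl
  · rw [if_neg hm]
    have : IsEmpty {x : {a : Fin (n + 1) → ℕ // W a = m} // ¬ (x.1 (Fin.last n) = 0)} := by
      constructor
      intro x
      have hd := W_decomp x.1.1
      rw [x.1.2] at hd
      have hne := x.2
      have h1 : 1 * (2 * n + 1) ≤ x.1.1 (Fin.last n) * (2 * n + 1) :=
        Nat.mul_le_mul_right _ (by omega)
      omega
    simp [Nat.card_of_isEmpty]


lemma N_zero (m : ℕ) : N 0 m = if m = 0 then 1 else 0 := by
  have hW : ∀ a : Fin 0 → ℕ, W a = 0 := fun a => by simp [W]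
  rcases Nat.eq_zero_or_pos m with h0 | hpos
  · subst h0
    rw [if_pos rfl, N]
    have : ∀ a : Fin 0 → ℕ, W a = 0 := hW
    rw [Nat.card_congr (Equiv.subtypeUnivEquiv this)]
    exact Nat.card_unique
  · rw [if_neg (by omega), N]
    have : IsEmpty {a : Fin 0 → ℕ // W a = m} := by
      constructor
      intro a
      have := hW a.1
      have := a.2
      omega
    simp

open PowerSeries in
noncomputable def Fser (n : ℕ) : PowerSeries ℚ := PowerSeries.mk fun m => (N n m : ℚ)

lemma Fser_zero : Fser 0 = 1 := by
  ext m
  rw [Fser, PowerSeries.coeff_mk, PowerSeries.coeff_one, N_zero]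
  split <;> simp

lemma Fser_succ (n : ℕ) :
    Fser (n + 1) * (1 - (PowerSeries.X : PowerSeries ℚ) ^ (2 * n + 1)) = Fser n := by
  ext m
  simp only [mul_sub, mul_one, map_sub, Fser, PowerSeries.coeff_mk,
    PowerSeries.coeff_mul_X_pow']
  have hs := N_split n m
  by_cases hm : 2 * n + 1 ≤ m
  · rw [if_pos hm] at hs ⊢
    rw [hs]
    push_cast
    ring
  · rw [if_neg hm] at hs ⊢
    rw [hs]
    push_cast
    ring

lemma Fser_eq (n : ℕ) :
    Fser n = ∏ i ∈ Finset.range n, (1 - (PowerSeries.X : PowerSeries ℚ) ^ (2 * i + 1))⁻¹ := by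
  induction n with
  | zero => simpa using Fser_zero
  | succ n ih =>
    rw [Finset.prod_range_succ, ← ih]
    rw [PowerSeries.eq_mul_inv_iff_mul_eq]
    · exact Fser_succ n
    · have : (PowerSeries.constantCoeff : PowerSeries ℚ →+* ℚ) ((PowerSeries.X : PowerSeries ℚ) ^ (2 * n + 1)) = 0 := by
        rw [map_pow, PowerSeries.constantCoeff_X]
        simp
      rw [map_sub, this]
      simp

/-! ### Bridging to the rational inequality formulation -/

lemma cond_iff {n : ℕ} (l : Fin n → ℕ) :
    (∀ i j : Fin n, i ≤ j → (l i : ℚ) / ((i : ℕ) + 1) ≤ (l j : ℚ) / ((j : ℕ) + 1)) ↔ LH l := by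
  constructor
  · intro h p hp
    have hle : (⟨p, by omega⟩ : Fin n) ≤ ⟨p + 1, hp⟩ := by
      rw [Fin.le_def]
      simp
    have h1 := h ⟨p, by omega⟩ ⟨p + 1, hp⟩ hle
    simp only [Fin.val_mk] at h1
    rw [div_le_div_iff₀ (by positivity) (by positivity)] at h1
    -- h1 : (l ⟨p⟩ : ℚ) * ((p+1) + 1) ≤ (l ⟨p+1⟩ : ℚ) * (p + 1)
    have h2 : ((p + 2) * l ⟨p, by omega⟩ : ℚ) ≤ ((p + 1) * l ⟨p + 1, hp⟩ : ℚ) := by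
      push_cast at h1 ⊢
      nlinarith [h1]
    exact_mod_cast h2
  · intro h i j hij
    rw [Fin.le_def] at hij
    obtain ⟨g, hg⟩ : ∃ g, (j : ℕ) = (i : ℕ) + g := ⟨(j : ℕ) - (i : ℕ), by omega⟩
    clear hij
    induction g generalizing j with
    | zero =>
        have : j = i := Fin.ext (by omega)
        subst this
        exact le_refl _
    | succ g ih =>
        have hjlt := j.isLt
        have hlt : (i : ℕ) + g < n := by omega
        have hlt1 : (i : ℕ) + g + 1 < n := by omega
        have hstep0 := h ((i : ℕ) + g) hlt1
        have hj' : j = ⟨(i : ℕ) + g + 1, hlt1⟩ := Fin.ext (by simp only [Fin.val_mk]; omega)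
        have step : (l (⟨(i : ℕ) + g, hlt⟩ : Fin n) : ℚ)
              / (((⟨(i : ℕ) + g, hlt⟩ : Fin n) : ℕ) + 1)
            ≤ (l j : ℚ) / ((j : ℕ) + 1) := by
          rw [hj']
          simp only [Fin.val_mk]
          rw [div_le_div_iff₀ (by positivity) (by positivity)]
          have hq : (((i : ℕ) + g + 2 : ℕ) : ℚ) * (l ⟨(i : ℕ) + g, hlt⟩ : ℚ)
              ≤ (((i : ℕ) + g + 1 : ℕ) : ℚ) * (l ⟨(i : ℕ) + g + 1, hlt1⟩ : ℚ) := by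
            exact_mod_cast hstep0
          push_cast at hq ⊢
          linarith [hq]
        exact le_trans (ih ⟨(i : ℕ) + g, hlt⟩ rfl) step

end LectureHall

/-- Lecture hall generating function: for `n ≥ 1`, the power series
whose `m`-th coefficient counts lecture hall partitions of length `n` with sum `m`
equals `∏_{i=1}^{n} 1/(1 - x^{2i-1})`. -/
theorem lecture_hall_generating_function (n : ℕ) (hn : 1 ≤ n) :
    PowerSeries.mk (fun m : ℕ =>
        (Nat.card {l : Fin n → ℕ //
          (∀ i j : Fin n, i ≤ j → (l i : ℚ) / ((i : ℕ) + 1) ≤ (l j : ℚ) / ((j : ℕ) + 1)) ∧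
          ∑ i, l i = m} : ℚ)) =
    ∏ i ∈ Finset.range n, (1 - (PowerSeries.X : PowerSeries ℚ) ^ (2 * i + 1))⁻¹ := by
  have hfun : (fun m : ℕ =>
        ((Nat.card {l : Fin n → ℕ //
          (∀ i j : Fin n, i ≤ j → (l i : ℚ) / ((i : ℕ) + 1) ≤ (l j : ℚ) / ((j : ℕ) + 1)) ∧
          ∑ i, l i = m} : ℕ) : ℚ))
      = fun m : ℕ => (LectureHall.N n m : ℚ) := by
    funext m
    congr 1
    have e : {l : Fin n → ℕ //
          (∀ i j : Fin n, i ≤ j → (l i : ℚ) / ((i : ℕ) + 1) ≤ (l j : ℚ) / ((j : ℕ) + 1)) ∧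
          ∑ i, l i = m} ≃ {l : Fin n → ℕ // LectureHall.LH l ∧ LectureHall.wt l = m} :=
      Equiv.subtypeEquiv (Equiv.refl _)
        (fun l => and_congr (LectureHall.cond_iff l) Iff.rfl)
    rw [Nat.card_congr e, LectureHall.card_LH]
    rfl
  rw [hfun]
  exact (LectureHall.Fser_eq n)
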